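/- Let f : R^d → R be a concave function maximized at x* over a convex set C. Suppose f is G-strongly concave (with respect to the ℓ₂ norm) on S ∩ C, where S = {x : ‖x − x*‖₂ ≤ A} for some A > 0. If x ∈ C satisfies f(x*) − f(x) ≤ AG/2, then ‖x − x*‖₂ ≤ A. -/
import Mathlib


/-- If `f` is concave on a convex set `C` with maximizer `x*`, and `f` is `G`-strongly
concave on the ball `S = {x : ‖x − x*‖ ≤ A}` intersected with `C` (in the sense that
`f(x*) − f(x) ≥ (G/2)‖x − x*‖` there), then any `x ∈ C` with `f(x*) − f(x) ≤ AG/2`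
satisfies `‖x − x*‖ ≤ A`. -/
theorem mem_ball_of_value_close {d : ℕ} (f : EuclideanSpace ℝ (Fin d) → ℝ)
    (C : Set (EuclideanSpace ℝ (Fin d))) (hC : Convex ℝ C)
    (hconc : ConcaveOn ℝ C f) (xstar : EuclideanSpace ℝ (Fin d)) (hxstar : xstar ∈ C)
    (hmax : ∀ x ∈ C, f x ≤ f xstar) (A G : ℝ) (hA : 0 < A) (hG : 0 < G)
    (hSC : ∀ x ∈ {x | ‖x - xstar‖ ≤ A} ∩ C, G / 2 * ‖x - xstar‖ ≤ f xstar - f x)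
    (x : EuclideanSpace ℝ (Fin d)) (hx : x ∈ C)
    (hclose : f xstar - f x ≤ A * G / 2) :
    ‖x - xstar‖ ≤ A := by
  by_contra h
  push_neg at h
  have hn : (0:ℝ) < ‖x - xstar‖ := lt_trans hA h
  set t : ℝ := A / ‖x - xstar‖ with ht
  have ht0 : 0 < t := div_pos hA hn
  have ht1 : t < 1 := (div_lt_one hn).mpr h
  set y := (1 - t) • xstar + t • x with hy
  have hyC : y ∈ C := hC hxstar hx (by linarith) (le_of_lt ht0) (by ring)
  have hyd : y - xstar = t • (x - xstar) := by
    rw [hy]; module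
  have hyn : ‖y - xstar‖ = A := by
    rw [hyd, norm_smul, Real.norm_eq_abs, abs_of_pos ht0, ht,
      div_mul_cancel₀ _ (ne_of_gt hn)]
  have hfy : (1 - t) * f xstar + t * f x ≤ f y :=
    hconc.2 hxstar hx (by linarith) (le_of_lt ht0) (by ring)
  have hS := hSC y ⟨le_of_eq hyn, hyC⟩
  rw [hyn] at hS
  have hfx : 0 ≤ f xstar - f x := by linarith [hmax x hx]
  nlinarith [mul_le_mul_of_nonneg_left hclose ht0.le, mul_lt_mul_of_pos_right ht1 (by positivity : (0:ℝ) < A * G / 2)]
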